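/- Let k be a commutative noetherian ring, let (P_i)_{i ∈ I} be an inverse system of projective k-modules indexed by a cofiltered small category I, and let J be an injective k-module. Then the k-module colim_{i ∈ I^op} Hom_k(P_i, J) (the filtered colimit of the Hom modules along the inverse system) is injective. -/

import Mathlib

open CategoryTheory CategoryTheory.Limits

section Aux

variable {k : Type} [CommRing k]

/-- If `M` is a projective `k`-module and `J` an injective `k`-module, then
`Hom_k(M, J)` is an injective `k`-module. -/
lemma homModule_injective (M : Type) [AddCommGroup M] [Module k M] [Module.Projective k M]
    (J : Type) [AddCommGroup J] [Module k J] [Module.Injective k J] :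
    Module.Injective k (M →ₗ[k] J) where
  out X Y _ _ _ _ i hi f := by
    have hinj : Function.Injective (LinearMap.rTensor M i) :=
      Module.Flat.rTensor_preserves_injective_linearMap i hi
    obtain ⟨g', hg'⟩ := Module.Injective.out (LinearMap.rTensor M i) hinj
      (TensorProduct.lift f)
    refine ⟨TensorProduct.curry g', fun x => ?_⟩
    ext p
    have := hg' (x ⊗ₜ[k] p)
    simpa using this

/-- In a filtered colimit of modules, finitely many elements of a stage that die in the
colimit can be killed simultaneously by a single transition map. -/
lemma exists_kill {I : Type} [SmallCategory I] [IsFiltered I]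
    (F : I ⥤ ModuleCat.{0} k) (j₀ : I) (L : List (F.obj j₀))
    (h : ∀ a ∈ L, ∃ (j' : I) (u : j₀ ⟶ j'), F.map u a = 0) :
    ∃ (j₁ : I) (u : j₀ ⟶ j₁), ∀ a ∈ L, F.map u a = 0 := by
  induction L with
  | nil => exact ⟨j₀, 𝟙 j₀, by simp⟩
  | cons a L ih =>
    obtain ⟨j₁, u, hu⟩ := ih (fun b hb => h b (List.mem_cons_of_mem a hb))
    obtain ⟨j₂, w, hw⟩ := h a List.mem_cons_self
    set l := IsFiltered.leftToMax j₁ j₂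
    set r := IsFiltered.rightToMax j₁ j₂
    set c := IsFiltered.coeqHom (u ≫ l) (w ≫ r)
    refine ⟨_, u ≫ l ≫ c, ?_⟩
    have hcomm : u ≫ l ≫ c = w ≫ r ≫ c := by
      rw [← Category.assoc, IsFiltered.coeq_condition (u ≫ l) (w ≫ r), Category.assoc]
    intro b hb
    rcases List.mem_cons.mp hb with rfl | hb
    · rw [hcomm, F.map_comp]
      change F.map (r ≫ c) (F.map w b) = 0
      rw [hw, map_zero]
    · rw [F.map_comp]
      change F.map (l ≫ c) (F.map u b) = 0
      rw [hu b hb, map_zero]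

end Aux

/-- Let `k` be a commutative noetherian ring, `(P_i)_{i ∈ I}`
an inverse system of projective `k`-modules indexed by a cofiltered small
category `I`, and `J` an injective `k`-module.  Then the filtered colimit
`colim_{i ∈ Iᵒᵖ} Hom_k(P_i, J)` of the Hom modules along the inverse system is
an injective `k`-module. -/
theorem stmt_8 (k : Type) [CommRing k] [IsNoetherianRing k]
    (I : Type) [SmallCategory I] [IsCofiltered I]
    (P : I ⥤ ModuleCat.{0} k)
    (hproj : ∀ i : I, Module.Projective k (P.obj i))
    (J : Type) [AddCommGroup J] [Module k J] [Module.Injective k J] :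
    Injective
      (colimit (P.op ⋙ (linearYoneda k (ModuleCat.{0} k)).obj (ModuleCat.of k J))) := by
  classical
  set F : Iᵒᵖ ⥤ ModuleCat.{0} k :=
    P.op ⋙ (linearYoneda k (ModuleCat.{0} k)).obj (ModuleCat.of k J) with hF
  -- each stage is an injective module
  have hFinj : ∀ j : Iᵒᵖ, Module.Injective k (F.obj j) := by
    intro j
    have : Module.Projective k (P.obj j.unop) := hproj _
    exact Module.Baer.injective (Module.Baer.of_equiv (ModuleCat.homLinearEquiv (S := k)).symm
      (Module.Baer.of_injective (homModule_injective (k := k) (P.obj j.unop) J)))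
  -- it suffices to prove the underlying module is injective
  suffices h : Module.Injective k ((colimit F).carrier) by
    exact Module.injective_object_of_injective_module k ((colimit F).carrier)
  -- Baer's criterion
  apply Module.Baer.injective
  intro 𝔦 g
  -- the ideal is finitely generated
  obtain ⟨s, hs⟩ : (𝔦 : Submodule k k).FG := IsNoetherian.noetherian 𝔦
  have hmem : ∀ x : ↥s, (x : k) ∈ 𝔦 := fun x => by
    rw [← hs]; exact Submodule.subset_span x.2
  set π0 : (↥s →₀ k) →ₗ[k] k := Finsupp.linearCombination k (Subtype.val : ↥s → k) with hπ0
  have hrange : LinearMap.range π0 = 𝔦 := by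
    rw [hπ0, Finsupp.range_linearCombination, Subtype.range_coe]
    exact hs
  set π : (↥s →₀ k) →ₗ[k] 𝔦 :=
    LinearMap.codRestrict (𝔦 : Submodule k k) π0
      (fun v => by rw [← hrange]; exact LinearMap.mem_range_self _ v) with hπ
  -- choose representatives of the images of the generators
  have hrep : ∀ x : ↥s, ∃ (j : Iᵒᵖ) (y : F.obj j),
      colimit.ι F j y = g ⟨(x : k), hmem x⟩ := fun x =>
    Limits.Concrete.colimit_exists_rep F (g ⟨(x : k), hmem x⟩)
  choose jf yf hyf using hrep
  -- push them to a common stage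
  set O : Finset Iᵒᵖ := Finset.image jf Finset.univ with hO
  set j₀ : Iᵒᵖ := IsFiltered.sup O ∅ with hj₀
  set y' : ↥s → F.obj j₀ := fun x =>
    F.map (IsFiltered.toSup O ∅ (Finset.mem_image_of_mem jf (Finset.mem_univ x))) (yf x)
    with hy'
  have hy'ι : ∀ x : ↥s, colimit.ι F j₀ (y' x) = g ⟨(x : k), hmem x⟩ := by
    intro x
    rw [← hyf x]
    exact colimit.w_apply F _ (yf x)
  set ψ : (↥s →₀ k) →ₗ[k] F.obj j₀ := Finsupp.linearCombination k y' with hψ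
  have h1 : ∀ v, colimit.ι F j₀ (ψ v) = g (π v) := by
    intro v
    induction v using Finsupp.induction_linear with
    | zero => simp
    | add a b ha hb => simp only [map_add, ha, hb]
    | single x c =>
      have hπs : π (Finsupp.single x c) = c • (⟨(x : k), hmem x⟩ : 𝔦) := by
        apply Subtype.ext
        simp [hπ, hπ0, Finsupp.linearCombination_single, LinearMap.codRestrict_apply]
      rw [hπs, map_smul, ← hy'ι x, hψ]
      simp [Finsupp.linearCombination_single, map_smul]
  -- the (finitely generated) relation module
  have : IsNoetherian k (↥s →₀ k) :=
    isNoetherian_of_linearEquiv (Finsupp.linearEquivFunOnFinite k k ↥s).symm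
  obtain ⟨T, hT⟩ : (LinearMap.ker π0).FG := IsNoetherian.noetherian _
  -- each relation dies at some later stage
  have hdies : ∀ a ∈ T.toList.map ψ, ∃ (j' : Iᵒᵖ) (u : j₀ ⟶ j'), F.map u a = 0 := by
    intro a ha
    obtain ⟨t, htT, rfl⟩ := List.mem_map.mp ha
    have htker : t ∈ LinearMap.ker π0 := by
      rw [← hT]; exact Submodule.subset_span (Finset.mem_toList.mp htT)
    have hπt : π t = 0 := by
      apply Subtype.ext
      simpa [hπ, LinearMap.codRestrict_apply] using htker
    have h0 : colimit.ι F j₀ (ψ t) = colimit.ι F j₀ 0 := by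
      rw [map_zero, h1 t, hπt, map_zero]
    obtain ⟨j', u, u', huu⟩ := Limits.Concrete.colimit_exists_of_rep_eq F _ _ h0
    exact ⟨j', u, huu.trans (map_zero _)⟩
  obtain ⟨j₁, u, hu⟩ := exists_kill F j₀ (T.toList.map ψ) hdies
  -- the induced map at stage j₁ kills the relations
  set ψ₁ : (↥s →₀ k) →ₗ[k] F.obj j₁ := ((F.map u).hom : F.obj j₀ →ₗ[k] F.obj j₁).comp ψ with hψ₁
  have hker : LinearMap.ker π0 ≤ LinearMap.ker ψ₁ := by
    rw [← hT, Submodule.span_le]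
    intro t ht
    have : ψ₁ t = 0 := hu (ψ t) (List.mem_map.mpr ⟨t, Finset.mem_toList.mpr ht, rfl⟩)
    simpa [LinearMap.mem_ker] using this
  have h2 : ∀ v, colimit.ι F j₁ (ψ₁ v) = g (π v) := by
    intro v
    rw [hψ₁, LinearMap.comp_apply, ← h1 v]
    exact colimit.w_apply F u (ψ v)
  -- factor through the quotient, which embeds in k
  set Qm := (↥s →₀ k) ⧸ LinearMap.ker π0 with hQm
  set ιQ : Qm →ₗ[k] k := Submodule.liftQ _ π0 le_rfl with hιQ
  have hιQinj : Function.Injective ιQ := by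
    rw [← LinearMap.ker_eq_bot, hιQ]
    exact Submodule.ker_liftQ_eq_bot _ _ _ le_rfl
  set ψQ : Qm →ₗ[k] F.obj j₁ := Submodule.liftQ _ ψ₁ hker with hψQ
  obtain ⟨h', hh'⟩ := (hFinj j₁).out ιQ hιQinj ψQ
  refine ⟨((colimit.ι F j₁).hom : F.obj j₁ →ₗ[k] (colimit F).carrier).comp h', ?_⟩
  intro x hx
  obtain ⟨v, hv⟩ : ∃ v, π0 v = x := by
    rw [← hrange] at hx; exact hx
  have hmk : ιQ (Submodule.Quotient.mk v) = x := by
    rw [hιQ, Submodule.liftQ_apply, hv]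
  have hπv : π v = ⟨x, hx⟩ := Subtype.ext hv
  calc (((colimit.ι F j₁).hom : F.obj j₁ →ₗ[k] (colimit F).carrier).comp h') x
      = colimit.ι F j₁ (h' (ιQ (Submodule.Quotient.mk v))) := by rw [hmk]; rfl
    _ = colimit.ι F j₁ (ψQ (Submodule.Quotient.mk v)) := by rw [hh']
    _ = colimit.ι F j₁ (ψ₁ v) := by rw [hψQ, Submodule.liftQ_apply]
    _ = g (π v) := h2 v
    _ = g ⟨x, hx⟩ := by rw [hπv]
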